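/- Let V be a finite-dimensional real inner product space, let g_1, …, g_n be a vector-space basis of V, and let L = {y_1 g_1 + ⋯ + y_n g_n : y_1, …, y_n ∈ ℤ} be the lattice generated by this basis. Let θ = max_{i=1,…,n} ‖g_i‖ and let r, R be positive reals with R ≥ r + θn. Then B_r ⊆ conv(B_R ∩ L). -/

import Mathlib

lemma fract_mix (c : ℝ) :
    Int.fract c * (⌈c⌉ : ℝ) + (1 - Int.fract c) * (⌊c⌋ : ℝ) = c := by
  have h1 : Int.fract c = c - ⌊c⌋ := (Int.self_sub_floor c).symm
  rcases Int.fract_eq_zero_or_add_one_sub_ceil c with h | h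
  · rw [h]; simp; linarith [h1 ▸ h]
  · have h2 : (⌈c⌉ : ℝ) = (⌊c⌋ : ℝ) + 1 := by linarith [h1 ▸ h]
    rw [h2]; nlinarith [h1]

theorem stmt_3 {V : Type*} [NormedAddCommGroup V] [InnerProductSpace ℝ V] {n : ℕ}
    (g : Module.Basis (Fin n) ℝ V)
    (L : Set V) (hL : L = {v | ∃ y : Fin n → ℤ, v = ∑ i, (y i : ℝ) • g i})
    (θ : ℝ) (hθ : IsGreatest (Set.range fun i => ‖g i‖) θ)
    (r R : ℝ) (hr : 0 < r) (hR : 0 < R) (hRr : R ≥ r + θ * n) :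
    Metric.closedBall (0 : V) r ⊆ convexHull ℝ (Metric.closedBall (0 : V) R ∩ L) := by
  intro x hx
  have hxr : ‖x‖ ≤ r := by simpa using hx
  set c : Fin n → ℝ := fun i => g.repr x i with hc
  have hxsum : ∑ i, c i • g i = x := g.sum_repr x
  set f : Fin n → ℝ := fun i => Int.fract (c i) with hf
  set A : Fin n → Finset (Fin n) → ℤ := fun i t => if i ∈ t then ⌈c i⌉ else ⌊c i⌋ with hA
  set z : Finset (Fin n) → V := fun t => ∑ i, ((A i t : ℝ)) • g i with hz
  set w : Finset (Fin n) → ℝ :=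
    fun t => (∏ i ∈ t, f i) * ∏ i ∈ Finset.univ \ t, (1 - f i) with hw
  have hθ0 : 0 ≤ θ := by
    obtain ⟨i, hi⟩ := hθ.1
    rw [← hi]; positivity
  have hgθ : ∀ i, ‖g i‖ ≤ θ := fun i => hθ.2 ⟨i, rfl⟩
  -- weights nonneg
  have hw0 : ∀ t ∈ Finset.univ.powerset, 0 ≤ w t := by
    intro t _
    apply mul_nonneg
    · exact Finset.prod_nonneg fun i _ => Int.fract_nonneg _
    · exact Finset.prod_nonneg fun i _ => by linarith [Int.fract_lt_one (c i)]
  -- weights sum to 1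
  have hw1 : ∑ t ∈ Finset.univ.powerset, w t = 1 := by
    rw [← Finset.prod_add]
    simp
  -- points in the set
  have hzmem : ∀ t ∈ Finset.univ.powerset, z t ∈ Metric.closedBall (0 : V) R ∩ L := by
    intro t _
    constructor
    · rw [Metric.mem_closedBall, dist_zero_right]
      have h1 : z t = x + ∑ i, ((A i t : ℝ) - c i) • g i := by
        rw [← hxsum, hz]
        rw [← Finset.sum_add_distrib]
        refine Finset.sum_congr rfl fun i _ => ?_
        rw [sub_smul]; abel
      rw [h1]
      calc ‖x + ∑ i, ((A i t : ℝ) - c i) • g i‖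
          ≤ ‖x‖ + ‖∑ i, ((A i t : ℝ) - c i) • g i‖ := norm_add_le _ _
        _ ≤ r + θ * n := by
            gcongr
            calc ‖∑ i, ((A i t : ℝ) - c i) • g i‖
                ≤ ∑ i, ‖((A i t : ℝ) - c i) • g i‖ := norm_sum_le _ _
              _ ≤ ∑ _i : Fin n, θ := by
                  apply Finset.sum_le_sum
                  intro i _
                  rw [norm_smul]
                  have habs : |((A i t : ℝ) - c i)| ≤ 1 := by
                    rw [hA]; dsimp only
                    split_ifs with h
                    · rw [abs_le]
                      constructor
                      · linarith [Int.le_ceil (c i)]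
                      · linarith [Int.ceil_lt_add_one (c i)]
                    · rw [abs_le]
                      constructor
                      · linarith [Int.sub_one_lt_floor (c i)]
                      · linarith [Int.floor_le (c i)]
                  calc |((A i t : ℝ) - c i)| * ‖g i‖ ≤ 1 * θ := by
                        apply mul_le_mul habs (hgθ i) (norm_nonneg _) (by norm_num)
                    _ = θ := one_mul θ
              _ = θ * n := by simp [mul_comm]
        _ ≤ R := by linarith
    · rw [hL]
      exact ⟨fun i => A i t, rfl⟩
  -- convex combination equals x
  have hcenter : ∑ t ∈ Finset.univ.powerset, w t • z t = x := by
    rw [← hxsum]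
    have : ∀ t, w t • z t = ∑ i, (w t * (A i t : ℝ)) • g i := by
      intro t
      rw [hz, Finset.smul_sum]
      refine Finset.sum_congr rfl fun i _ => ?_
      rw [smul_smul]
    simp_rw [this]
    rw [Finset.sum_comm]
    refine Finset.sum_congr rfl fun i _ => ?_
    rw [← Finset.sum_smul]
    congr 1
    have key : ∀ t ∈ Finset.univ.powerset, w t * (A i t : ℝ) =
        (∏ j ∈ t, (f j * (if j = i then ((⌈c i⌉ : ℤ) : ℝ) else 1))) *
        ∏ j ∈ Finset.univ \ t, ((1 - f j) * (if j = i then ((⌊c i⌋ : ℤ) : ℝ) else 1)) := by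
      intro t ht
      rw [Finset.prod_mul_distrib, Finset.prod_mul_distrib]
      rw [Finset.prod_ite_eq' t i, Finset.prod_ite_eq' (Finset.univ \ t) i]
      rw [hw, hA]
      have hmem : i ∈ Finset.univ \ t ↔ i ∉ t := by simp
      dsimp only
      by_cases h : i ∈ t
      · rw [if_pos h, if_pos h, if_neg (by simp [h])]
        ring
      · rw [if_neg h, if_neg h, if_pos (by simp [h])]
        ring
    rw [Finset.sum_congr rfl key, ← Finset.prod_add]
    have : ∀ j ∈ Finset.univ, (f j * (if j = i then ((⌈c i⌉ : ℤ) : ℝ) else 1)) +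
        ((1 - f j) * (if j = i then ((⌊c i⌋ : ℤ) : ℝ) else 1)) =
        if j = i then c i else 1 := by
      intro j _
      by_cases h : j = i
      · subst h
        rw [if_pos rfl, if_pos rfl, if_pos rfl]
        exact fract_mix (c j)
      · rw [if_neg h, if_neg h, if_neg h]; ring
    rw [Finset.prod_congr rfl this, Finset.prod_ite_eq' Finset.univ i]
    simp
  rw [← hcenter]
  exact (convex_convexHull ℝ _).sum_mem hw0 hw1
    (fun t ht => subset_convexHull ℝ _ (hzmem t ht))
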